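/- For every real x > 0, the branch W₋₁ of the Lambert W function satisfies W₋₁(−e^{−x−1}) ≥ −1 − √(2x) − x. -/

import Mathlib

lemma quad_le_exp {s : ℝ} (hs : 0 ≤ s) : 1 + s + s ^ 2 / 2 ≤ Real.exp s := by
  have h := Real.sum_le_exp_of_nonneg hs 3
  norm_num [Finset.sum_range_succ, Nat.factorial] at h
  linarith

lemma mul_exp_strictAntiOn : StrictAntiOn (fun t : ℝ => t * Real.exp t) (Set.Iic (-1)) := by
  apply strictAntiOn_of_deriv_neg (convex_Iic _)
  · exact (continuous_id.mul Real.continuous_exp).continuousOn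
  · intro t ht
    rw [interior_Iic] at ht
    have hd : HasDerivAt (fun t : ℝ => t * Real.exp t) (1 * Real.exp t + t * Real.exp t) t :=
      (hasDerivAt_id t).mul (Real.hasDerivAt_exp t)
    rw [hd.deriv]
    have : (1 + t) * Real.exp t < 0 :=
      mul_neg_of_neg_of_pos (by linarith [ht.out]) (Real.exp_pos t)
    linarith

/-- Chatzigeorgiou's bound on the branch `W₋₁` of the Lambert W function:
for every `x > 0`, the unique `y ≤ −1` with `y·e^y = −e^{−x−1}` (that is,
`y = W₋₁(−e^{−x−1})`) satisfies `y ≥ −1 − √(2x) − x`. -/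
theorem stmt15 (x : ℝ) (hx : 0 < x) (y : ℝ) (hy : y ≤ -1)
    (hW : y * Real.exp y = -Real.exp (-x - 1)) :
    -1 - Real.sqrt (2 * x) - x ≤ y := by
  set s := Real.sqrt (2 * x) with hs
  have hs0 : 0 ≤ s := Real.sqrt_nonneg _
  have hsq : s ^ 2 = 2 * x := Real.sq_sqrt (by linarith)
  set b := -1 - s - x with hb
  have hb1 : b ≤ -1 := by
    have : (0:ℝ) ≤ s + x := by positivity
    simp only [hb]; linarith
  by_contra h
  push_neg at h
  have hlt : b * Real.exp b < y * Real.exp y :=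
    mul_exp_strictAntiOn (Set.mem_Iic.mpr hy) (Set.mem_Iic.mpr hb1) h
  have hexp : 1 + s + x ≤ Real.exp s := by
    have := quad_le_exp hs0
    linarith [hsq]
  have e1 : Real.exp b = Real.exp (-x - 1) * Real.exp (-s) := by
    rw [← Real.exp_add, hb]; ring_nf
  have h2 : (1 + s + x) * Real.exp (-s) ≤ 1 := by
    calc (1 + s + x) * Real.exp (-s) ≤ Real.exp s * Real.exp (-s) :=
          mul_le_mul_of_nonneg_right hexp (Real.exp_pos _).le
      _ = 1 := by rw [← Real.exp_add]; simp
  have key : -Real.exp (-x - 1) ≤ b * Real.exp b := by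
    rw [e1, hb]
    nlinarith [Real.exp_pos (-x - 1), Real.exp_pos (-s)]
  rw [hW] at hlt
  linarith
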